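/- Let R be a commutative ring, M a projective R-module, and m a positive integer such that the integer m! acts invertibly on M. Let the symmetric group Σ_m act on the m-fold tensor power M^{⊗m} = M ⊗_R ⋯ ⊗_R M by permuting the tensor factors. Then the coinvariants (M^{⊗m})_{Σ_m} is a projective R-module. -/

import Mathlib

open scoped TensorProduct

private theorem auxProj (R : Type*) [CommRing R] (M : Type*) [AddCommGroup M] [Module R M]
    (hM : Module.Projective R M) (n : ℕ) :
    Module.Projective R (⨂[R] (_ : Fin n), M) := by
  induction n with
  | zero =>
    exact Module.Projective.of_equiv
      (PiTensorProduct.isEmptyEquiv (R := R) (s := fun _ : Fin 0 => M) (Fin 0)).symm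
  | succ n ih =>
    haveI : Module.Projective R (⨂[R] (_ : Fin 1), M) :=
      Module.Projective.of_equiv
        (PiTensorProduct.subsingletonEquiv (R := R) (s := fun _ : Fin 1 => M) (0 : Fin 1)).symm
    haveI := ih
    haveI : Module.Projective R ((⨂[R] (_ : Fin n), M) ⊗[R] (⨂[R] (_ : Fin 1), M)) :=
      Module.Projective.tensorProduct
    exact Module.Projective.of_equiv (TensorPower.mulEquiv (R := R) (M := M) (n := n) (m := 1))

theorem stmt4 (R : Type*) [CommRing R] (M : Type*) [AddCommGroup M] [Module R M]
    (hM : Module.Projective R M) (m : ℕ) (hm : 0 < m)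
    (hinv : Function.Bijective fun x : M => ((Nat.factorial m : ℤ)) • x) :
    Module.Projective R
      ((⨂[R] (_ : Fin m), M) ⧸
        Submodule.span R {y : ⨂[R] (_ : Fin m), M |
          ∃ (σ : Equiv.Perm (Fin m)) (t : ⨂[R] (_ : Fin m), M),
            PiTensorProduct.reindex R (fun _ : Fin m => M) σ t - t = y}) := by
  classical
  set T := ⨂[R] (_ : Fin m), M with hT
  set N : Submodule R T := Submodule.span R {y : T |
      ∃ (σ : Equiv.Perm (Fin m)) (t : T),
        PiTensorProduct.reindex R (fun _ : Fin m => M) σ t - t = y} with hN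
  set r : R := (Nat.factorial m : R) with hr
  -- bijectivity of r • on M
  have hfM : Function.Bijective (fun x : M => r • x) := by
    have : (fun x : M => r • x) = fun x : M => ((Nat.factorial m : ℤ)) • x := by
      funext x
      rw [← Int.cast_smul_eq_zsmul R, hr]
      norm_num
    rw [this]
    exact hinv
  have hfMl : Function.Bijective ((r • LinearMap.id : M →ₗ[R] M)) := by
    exact hfM
  set fe : M ≃ₗ[R] M := LinearEquiv.ofBijective _ hfMl with hfe
  have hfe_apply : ∀ x : M, fe x = r • x := fun x => rfl
  set i0 : Fin m := ⟨0, hm⟩ with hi0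
  set E : T ≃ₗ[R] T :=
    PiTensorProduct.congr (Function.update (fun _ : Fin m => LinearEquiv.refl R M) i0 fe)
    with hE
  have hEeq : (E : T →ₗ[R] T) = r • LinearMap.id := by
    refine PiTensorProduct.ext (MultilinearMap.ext fun x => ?_)
    simp only [LinearMap.compMultilinearMap_apply, LinearEquiv.coe_coe,
      LinearMap.smul_apply, LinearMap.id_apply]
    rw [hE, PiTensorProduct.congr_tprod]
    have h1 : (fun i => (Function.update (fun _ : Fin m => LinearEquiv.refl R M) i0 fe i) (x i))
        = Function.update x i0 (r • x i0) := by
      funext i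
      rcases eq_or_ne i i0 with rfl | h
      · simp [hfe_apply]
      · simp [Function.update_of_ne h]
    rw [h1]
    have := (PiTensorProduct.tprod R (s := fun _ : Fin m => M)).map_update_smul x i0 r (x i0)
    rwa [Function.update_eq_self] at this
  have hTbij : Function.Bijective ((r • LinearMap.id : T →ₗ[R] T)) := by
    rw [← hEeq]; exact E.bijective
  -- inverse of r • on T
  set u : T →ₗ[R] T := (E.symm : T →ₗ[R] T) with hu
  have hEsmul : ∀ y : T, E y = r • y := by
    intro y
    have := LinearMap.congr_fun hEeq y
    simpa using this
  have hur : ∀ x : T, u (r • x) = x := by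
    intro x
    rw [hu, ← hEsmul]
    exact E.symm_apply_apply x
  have hru : ∀ x : T, r • u x = x := by
    intro x
    rw [hu, ← hEsmul]
    exact E.apply_symm_apply x
  -- u commutes with reindex
  have hucomm : ∀ (σ : Equiv.Perm (Fin m)) (x : T),
      u (PiTensorProduct.reindex R (fun _ : Fin m => M) σ x)
        = PiTensorProduct.reindex R (fun _ : Fin m => M) σ (u x) := by
    intro σ x
    apply hTbij.injective
    simp only [LinearMap.smul_apply, LinearMap.id_apply]
    rw [hru, ← map_smul, hru]
  -- the symmetrization operator
  set S : T →ₗ[R] T :=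
    ∑ σ : Equiv.Perm (Fin m), (PiTensorProduct.reindex R (fun _ : Fin m => M) σ : T →ₗ[R] T)
    with hS
  have hS_apply : ∀ x : T,
      S x = ∑ σ : Equiv.Perm (Fin m), PiTensorProduct.reindex R (fun _ : Fin m => M) σ x := by
    intro x; rw [hS]; simp [LinearMap.sum_apply]
  have hSinv : ∀ (σ : Equiv.Perm (Fin m)) (t : T),
      S (PiTensorProduct.reindex R (fun _ : Fin m => M) σ t) = S t := by
    intro σ t
    rw [hS_apply, hS_apply]
    have : ∀ τ : Equiv.Perm (Fin m),
        PiTensorProduct.reindex R (fun _ : Fin m => M) τ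
          (PiTensorProduct.reindex R (fun _ : Fin m => M) σ t)
        = PiTensorProduct.reindex R (fun _ : Fin m => M) (τ * σ) t := by
      intro τ
      exact PiTensorProduct.reindex_reindex σ τ t
    simp only [this]
    exact Fintype.sum_equiv (Equiv.mulRight σ)
      (fun τ => PiTensorProduct.reindex R (fun _ : Fin m => M) (τ * σ) t)
      (fun τ => PiTensorProduct.reindex R (fun _ : Fin m => M) τ t)
      (fun τ => by simp)
  have hNS : N ≤ LinearMap.ker (u.comp S) := by
    rw [hN]
    refine Submodule.span_le.mpr ?_
    rintro y ⟨σ, t, rfl⟩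
    simp only [SetLike.mem_coe, LinearMap.mem_ker, LinearMap.comp_apply, map_sub, hSinv,
      sub_self, map_zero]
  set s : (T ⧸ N) →ₗ[R] T := Submodule.liftQ N (u.comp S) hNS with hs
  -- u descends to the quotient
  have huN : N ≤ N.comap u := by
    rw [hN]
    refine Submodule.span_le.mpr ?_
    rintro y ⟨σ, t, rfl⟩
    simp only [SetLike.mem_coe, Submodule.mem_comap, map_sub, hucomm]
    exact Submodule.subset_span ⟨σ, u t, rfl⟩
  set uQ : (T ⧸ N) →ₗ[R] (T ⧸ N) := Submodule.mapQ N N u huN with huQ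
  have hQinj : Function.Injective (fun q : T ⧸ N => r • q) := by
    have hleft : ∀ q : T ⧸ N, uQ (r • q) = q := by
      intro q
      obtain ⟨x, rfl⟩ := Submodule.mkQ_surjective N q
      rw [← map_smul, huQ, Submodule.mkQ_apply, Submodule.mapQ_apply, hur, Submodule.mkQ_apply]
    intro a b hab
    have := congrArg uQ hab
    simpa [hleft] using this
  -- splitting
  have hsplit : (Submodule.mkQ N).comp s = LinearMap.id := by
    apply Submodule.linearMap_qext
    refine LinearMap.ext fun x => ?_
    simp only [LinearMap.comp_apply, Submodule.mkQ_apply, hs, Submodule.liftQ_apply,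
      LinearMap.id_apply]
    apply hQinj
    show r • (Submodule.Quotient.mk (u (S x)) : T ⧸ N) = r • Submodule.Quotient.mk x
    rw [← Submodule.Quotient.mk_smul, hru]
    have hmk : ∀ σ : Equiv.Perm (Fin m),
        (Submodule.Quotient.mk (PiTensorProduct.reindex R (fun _ : Fin m => M) σ x) : T ⧸ N)
          = Submodule.Quotient.mk x := by
      intro σ
      rw [Submodule.Quotient.eq]
      exact Submodule.subset_span ⟨σ, x, rfl⟩
    rw [hS_apply]
    rw [show (Submodule.Quotient.mk (∑ σ : Equiv.Perm (Fin m),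
        PiTensorProduct.reindex R (fun _ : Fin m => M) σ x) : T ⧸ N)
      = ∑ σ : Equiv.Perm (Fin m), (Submodule.Quotient.mk
          (PiTensorProduct.reindex R (fun _ : Fin m => M) σ x) : T ⧸ N) from map_sum N.mkQ _ _]
    simp only [hmk, Finset.sum_const, Finset.card_univ]
    rw [Fintype.card_perm, Fintype.card_fin]
    rw [← Nat.cast_smul_eq_nsmul R, hr]
  haveI : Module.Projective R T := auxProj R M hM m
  exact Module.Projective.of_split s (Submodule.mkQ N) hsplit
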